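/- Let (f_n(x)) be a sequence of binomial type with f₀(x) = 1, let a be a real number, and define f_n(x; a) := (x/(an + x)) · f_n(an + x) for n ≥ 1 with f₀(x; a) := 1. Then for all natural numbers n ≥ k ≥ 1 and all real x, B_{n,k}(D_x f₁(x; a), D_x f₂(x; a), ..., D_x f_m(x; a), ...) = (1/k!) · D_z^k f_n(kx + z; a) |_{z=0}, where D_x denotes differentiation with respect to x in the polynomial sense. -/

import Mathlib

open Finset

/-- The exponential partial Bell polynomial `B_{n,k}(x₁,x₂,…)`, defined via the
generating function `∑_{n} B_{n,k} tⁿ/n! = (1/k!) (∑_{m≥1} x_m t^m/m!)^k`. -/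
noncomputable def bellB (n k : ℕ) (x : ℕ → ℝ) : ℝ :=
  ((Nat.factorial n : ℝ) / (Nat.factorial k : ℝ)) *
    PowerSeries.coeff n
      ((PowerSeries.mk fun m => if m = 0 then 0 else x m / (Nat.factorial m : ℝ)) ^ k)

/-- The complete Bell polynomial `A_n(x₁,…,x_n) = ∑_{k=1}^n B_{n,k}`, `A₀ = 1`. -/
noncomputable def bellA (n : ℕ) (x : ℕ → ℝ) : ℝ :=
  if n = 0 then 1 else ∑ k ∈ Finset.Icc 1 n, bellB n k x


open Finset.Nat Polynomial


/-- Triple antidiagonal sum: regroup `((q,r),l)` as `(q,(r,l))`. -/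
lemma AD3a (M : ℕ) (h : ℕ → ℕ → ℕ → ℝ) :
    ∑ p ∈ antidiagonal M, ∑ q ∈ antidiagonal p.1, h q.1 q.2 p.2
      = ∑ p ∈ antidiagonal M, ∑ q ∈ antidiagonal p.2, h p.1 q.1 q.2 := by
  rw [Finset.sum_sigma', Finset.sum_sigma']
  refine Finset.sum_nbij' (fun x => ⟨(x.2.1, x.2.2 + x.1.2), (x.2.2, x.1.2)⟩)
    (fun y => ⟨(y.1.1 + y.2.1, y.2.2), (y.1.1, y.2.1)⟩) ?_ ?_ ?_ ?_ ?_
  · intro x hx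
    obtain ⟨⟨i, l⟩, ⟨q, r⟩⟩ := x
    simp only [Finset.mem_sigma, Finset.HasAntidiagonal.mem_antidiagonal, and_true, true_and] at hx ⊢; omega
  · intro x hx
    obtain ⟨⟨i, l⟩, ⟨q, r⟩⟩ := x
    simp only [Finset.mem_sigma, Finset.HasAntidiagonal.mem_antidiagonal, and_true, true_and] at hx ⊢; omega
  · intro x hx
    simp only [Finset.mem_sigma, Finset.HasAntidiagonal.mem_antidiagonal] at hx
    obtain ⟨⟨i, l⟩, ⟨q, r⟩⟩ := x
    simp only at hx ⊢
    obtain ⟨h1, h2⟩ := hx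
    subst h1; congr 1 <;> simp [h2]
  · intro y hy
    simp only [Finset.mem_sigma, Finset.HasAntidiagonal.mem_antidiagonal] at hy
    obtain ⟨⟨q, w⟩, ⟨r, l⟩⟩ := y
    simp only at hy ⊢
    obtain ⟨h1, h2⟩ := hy
    subst h1; congr 1 <;> simp [h2]
  · intro x hx; rfl

/-- Triple antidiagonal sum: regroup `((q,r),l)` as `(r,(q,l))` (extract middle index). -/
lemma AD3b (M : ℕ) (h : ℕ → ℕ → ℕ → ℝ) :
    ∑ p ∈ antidiagonal M, ∑ q ∈ antidiagonal p.1, h q.1 q.2 p.2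
      = ∑ p ∈ antidiagonal M, ∑ q ∈ antidiagonal p.2, h q.1 p.1 q.2 := by
  rw [Finset.sum_sigma', Finset.sum_sigma']
  refine Finset.sum_nbij' (fun x => ⟨(x.2.2, x.2.1 + x.1.2), (x.2.1, x.1.2)⟩)
    (fun y => ⟨(y.2.1 + y.1.1, y.2.2), (y.2.1, y.1.1)⟩) ?_ ?_ ?_ ?_ ?_
  · intro x hx
    obtain ⟨⟨i, l⟩, ⟨q, r⟩⟩ := x
    simp only [Finset.mem_sigma, Finset.HasAntidiagonal.mem_antidiagonal, and_true, true_and] at hx ⊢; omega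
  · intro x hx
    obtain ⟨⟨i, l⟩, ⟨q, r⟩⟩ := x
    simp only [Finset.mem_sigma, Finset.HasAntidiagonal.mem_antidiagonal, and_true, true_and] at hx ⊢; omega
  · intro x hx
    simp only [Finset.mem_sigma, Finset.HasAntidiagonal.mem_antidiagonal] at hx
    obtain ⟨⟨i, l⟩, ⟨q, r⟩⟩ := x
    simp only at hx ⊢
    obtain ⟨h1, h2⟩ := hx
    subst h1; congr 1 <;> simp [h2]
  · intro y hy
    simp only [Finset.mem_sigma, Finset.HasAntidiagonal.mem_antidiagonal] at hy
    obtain ⟨⟨r, w⟩, ⟨q, l⟩⟩ := y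
    simp only at hy ⊢
    obtain ⟨h1, h2⟩ := hy
    subst h1; congr 1 <;> simp [h2]
  · intro x hx; rfl

lemma ADswap (n : ℕ) (h : ℕ → ℕ → ℝ) :
    ∑ p ∈ antidiagonal n, h p.1 p.2 = ∑ p ∈ antidiagonal n, h p.2 p.1 := by
  rw [← Finset.Nat.sum_antidiagonal_swap]; rfl

lemma eval_shift_hasDeriv (p : Polynomial ℝ) (u y : ℝ) :
    HasDerivAt (fun t => p.eval (u + t)) (p.derivative.eval (u + y)) y := by
  simpa [Function.comp_def] using (p.hasDerivAt (u + y)).comp y ((hasDerivAt_id y).const_add u)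

lemma eval_negshift_hasDeriv (p : Polynomial ℝ) (c y : ℝ) :
    HasDerivAt (fun t => p.eval (c - t)) (-p.derivative.eval (c - y)) y := by
  simpa [Function.comp_def] using (p.hasDerivAt (c - y)).comp y ((hasDerivAt_id y).const_sub c)
/-- Normalized sequence `φ_n(u) = f_n(u)/n!`. -/
noncomputable def phiF (f : ℕ → Polynomial ℝ) (n : ℕ) (u : ℝ) : ℝ :=
  (f n).eval u / (Nat.factorial n : ℝ)

/-- Derivative of `phiF`. -/
noncomputable def dphiF (f : ℕ → Polynomial ℝ) (n : ℕ) (u : ℝ) : ℝ :=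
  ((f n).derivative).eval u / (Nat.factorial n : ℝ)

noncomputable def dcoefF (f : ℕ → Polynomial ℝ) (r : ℕ) : ℝ := dphiF f r 0

noncomputable def gcoefF (f : ℕ → Polynomial ℝ) (j : ℕ) : ℝ :=
  ((j : ℝ) + 1) * dcoefF f (j + 1)

lemma phiF_hasDeriv (f : ℕ → Polynomial ℝ) (n : ℕ) (u : ℝ) :
    HasDerivAt (fun t => phiF f n t) (dphiF f n u) u :=
  ((f n).hasDerivAt u).div_const _

lemma phiF_shift_hasDeriv (f : ℕ → Polynomial ℝ) (n : ℕ) (c y : ℝ) :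
    HasDerivAt (fun t => phiF f n (c + t)) (dphiF f n (c + y)) y :=
  (eval_shift_hasDeriv (f n) c y).div_const _

lemma phiF_negshift_hasDeriv (f : ℕ → Polynomial ℝ) (n : ℕ) (c y : ℝ) :
    HasDerivAt (fun t => phiF f n (c - t)) (-dphiF f n (c - y)) y := by
  have := (eval_negshift_hasDeriv (f n) c y).div_const (Nat.factorial n : ℝ)
  simpa [dphiF, phiF, neg_div] using this

section Main

variable {f : ℕ → Polynomial ℝ}

lemma phiF_zero (hf0 : f 0 = 1) (u : ℝ) : phiF f 0 u = 1 := by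
  simp [phiF, hf0]

lemma phiF_add
    (hbin : ∀ n : ℕ, ∀ x y : ℝ, (f n).eval (x + y) =
      ∑ j ∈ Finset.range (n + 1), (n.choose j : ℝ) * (f j).eval x * (f (n - j)).eval y)
    (n : ℕ) (u v : ℝ) :
    phiF f n (u + v) = ∑ p ∈ antidiagonal n, phiF f p.1 u * phiF f p.2 v := by
  rw [Finset.Nat.sum_antidiagonal_eq_sum_range_succ (fun i j => phiF f i u * phiF f j v)]
  unfold phiF
  rw [hbin n u v, Finset.sum_div]
  refine Finset.sum_congr rfl fun j hj => ?_
  have hj' : j ≤ n := by simpa [Nat.lt_succ_iff] using Finset.mem_range.mp hj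
  rw [Nat.cast_choose ℝ hj']
  have h1 : (Nat.factorial j : ℝ) ≠ 0 := Nat.cast_ne_zero.2 (Nat.factorial_ne_zero j)
  have h2 : (Nat.factorial (n - j) : ℝ) ≠ 0 := Nat.cast_ne_zero.2 (Nat.factorial_ne_zero _)
  have h3 : (Nat.factorial n : ℝ) ≠ 0 := Nat.cast_ne_zero.2 (Nat.factorial_ne_zero n)
  field_simp

lemma phiF_at_zero (hf0 : f 0 = 1)
    (hbin : ∀ n : ℕ, ∀ x y : ℝ, (f n).eval (x + y) =
      ∑ j ∈ Finset.range (n + 1), (n.choose j : ℝ) * (f j).eval x * (f (n - j)).eval y)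
    (n : ℕ) (hn : 1 ≤ n) : phiF f n 0 = 0 := by
  suffices h : ∀ n : ℕ, 1 ≤ n → (f n).eval 0 = 0 by
    simp [phiF, h n hn]
  intro n
  induction n using Nat.strong_induction_on with
  | _ n IH =>
    intro hn
    have hfirst : ∑ j ∈ Finset.range n, (n.choose j : ℝ) * (f j).eval 0 * (f (n - j)).eval 0
        = (f n).eval 0 := by
      rw [Finset.sum_eq_single_of_mem 0 (Finset.mem_range.2 hn)]
      · simp [hf0]
      · intro j hj hj0
        have : (f j).eval 0 = 0 := IH j (Finset.mem_range.mp hj) (Nat.one_le_iff_ne_zero.2 hj0)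
        simp [this]
    have key := hbin n 0 0
    rw [add_zero, Finset.sum_range_succ, hfirst, Nat.sub_self] at key
    simp [hf0] at key
    linarith

lemma dcoefF_zero (hf0 : f 0 = 1) : dcoefF f 0 = 0 := by
  simp [dcoefF, dphiF, hf0]

/-- `(R1)`: `φ_n'(u) = ∑_{q+r=n} φ_q(u) d_r`. -/
lemma dphiF_eq (hf0 : f 0 = 1)
    (hbin : ∀ n : ℕ, ∀ x y : ℝ, (f n).eval (x + y) =
      ∑ j ∈ Finset.range (n + 1), (n.choose j : ℝ) * (f j).eval x * (f (n - j)).eval y)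
    (n : ℕ) (u : ℝ) :
    dphiF f n u = ∑ p ∈ antidiagonal n, phiF f p.1 u * dcoefF f p.2 := by
  have hfun : (fun t => phiF f n (u + t))
      = fun t => ∑ p ∈ antidiagonal n, phiF f p.1 u * phiF f p.2 t :=
    funext fun t => phiF_add hbin n u t
  have d1 : HasDerivAt (fun t => phiF f n (u + t)) (dphiF f n (u + 0)) 0 :=
    phiF_shift_hasDeriv f n u 0
  have d2 : HasDerivAt (fun t => ∑ p ∈ antidiagonal n, phiF f p.1 u * phiF f p.2 t)
      (∑ p ∈ antidiagonal n, phiF f p.1 u * dphiF f p.2 0) 0 :=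
    HasDerivAt.fun_sum fun p _ => (phiF_hasDeriv f p.2 0).const_mul (phiF f p.1 u)
  rw [hfun] at d1
  have := d1.unique d2
  simpa [dcoefF] using this

end Main
section Main2

variable {f : ℕ → Polynomial ℝ}

/-- `(R1''')`: `(m+1) φ_{m+1}(u) = u ∑_{j+l=m} g_j φ_l(u)`. -/
lemma L2phi (hf0 : f 0 = 1)
    (hbin : ∀ n : ℕ, ∀ x y : ℝ, (f n).eval (x + y) =
      ∑ j ∈ Finset.range (n + 1), (n.choose j : ℝ) * (f j).eval x * (f (n - j)).eval y)
    (m : ℕ) (u : ℝ) :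
    ((m : ℝ) + 1) * phiF f (m + 1) u
      = u * ∑ p ∈ antidiagonal m, gcoefF f p.1 * phiF f p.2 u := by
  induction m using Nat.strong_induction_on generalizing u with
  | _ m IH =>
  have hkey : ∀ u : ℝ, ((m : ℝ) + 1) * dphiF f (m + 1) u
      = (∑ p ∈ antidiagonal m, gcoefF f p.1 * phiF f p.2 u)
        + u * ∑ p ∈ antidiagonal m, gcoefF f p.1 * dphiF f p.2 u := by
    intro u
    have hA : ∑ p ∈ antidiagonal (m + 1), (p.1 : ℝ) * phiF f p.1 u * dcoefF f p.2
        = ∑ p ∈ antidiagonal m, ((p.1 : ℝ) + 1) * phiF f (p.1 + 1) u * dcoefF f p.2 := by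
      rw [Finset.Nat.sum_antidiagonal_succ
        (f := fun p => (p.1 : ℝ) * phiF f p.1 u * dcoefF f p.2)]
      push_cast
      simp
    have hB : ∑ p ∈ antidiagonal (m + 1), (p.2 : ℝ) * phiF f p.1 u * dcoefF f p.2
        = ∑ p ∈ antidiagonal m, gcoefF f p.1 * phiF f p.2 u := by
      rw [Finset.Nat.sum_antidiagonal_succ'
        (f := fun p => (p.2 : ℝ) * phiF f p.1 u * dcoefF f p.2)]
      rw [ADswap m (fun j l => gcoefF f j * phiF f l u)]
      push_cast
      simp only [Nat.cast_zero, zero_mul, mul_zero, zero_add]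
      refine Finset.sum_congr rfl fun p _ => ?_
      unfold gcoefF
      ring
    have hC : u * ∑ p ∈ antidiagonal m, gcoefF f p.1 * dphiF f p.2 u
        = ∑ p ∈ antidiagonal m, ((p.1 : ℝ) + 1) * phiF f (p.1 + 1) u * dcoefF f p.2 := by
      have e1 : ∀ p ∈ antidiagonal m, gcoefF f p.1 * dphiF f p.2 u
          = ∑ q ∈ antidiagonal p.2,
              gcoefF f p.1 * (phiF f q.1 u * dcoefF f q.2) := by
        intro p _
        rw [dphiF_eq hf0 hbin, Finset.mul_sum]
      rw [Finset.sum_congr rfl e1, Finset.mul_sum]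
      have e2 : ∀ p ∈ antidiagonal m,
          u * ∑ q ∈ antidiagonal p.2, gcoefF f p.1 * (phiF f q.1 u * dcoefF f q.2)
          = ∑ q ∈ antidiagonal p.2,
              u * (gcoefF f p.1 * (phiF f q.1 u * dcoefF f q.2)) := by
        intro p _; rw [Finset.mul_sum]
      rw [Finset.sum_congr rfl e2]
      rw [← AD3a m (fun j q r => u * (gcoefF f j * (phiF f q u * dcoefF f r)))]
      refine Finset.sum_congr rfl fun p hp => ?_
      rcases Nat.eq_zero_or_pos p.2 with h2 | h2
      · simp [h2, dcoefF_zero hf0]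
      · have hv : p.1 < m := by
          have := Finset.HasAntidiagonal.mem_antidiagonal.mp hp; omega
        have hIH := IH p.1 hv u
        calc ∑ q ∈ antidiagonal p.1, u * (gcoefF f q.1 * (phiF f q.2 u * dcoefF f p.2))
            = (u * ∑ q ∈ antidiagonal p.1, gcoefF f q.1 * phiF f q.2 u) * dcoefF f p.2 := by
              rw [Finset.mul_sum, Finset.sum_mul]
              exact Finset.sum_congr rfl fun q _ => by ring
          _ = ((p.1 : ℝ) + 1) * phiF f (p.1 + 1) u * dcoefF f p.2 := by rw [← hIH]
    rw [dphiF_eq hf0 hbin, Finset.mul_sum]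
    have hsplit : ∀ p ∈ antidiagonal (m + 1),
        ((m : ℝ) + 1) * (phiF f p.1 u * dcoefF f p.2)
          = (p.1 : ℝ) * phiF f p.1 u * dcoefF f p.2
            + (p.2 : ℝ) * phiF f p.1 u * dcoefF f p.2 := by
      intro p hp
      have := Finset.HasAntidiagonal.mem_antidiagonal.mp hp
      have : ((p.1 : ℝ) + (p.2 : ℝ)) = (m : ℝ) + 1 := by
        exact_mod_cast this
      rw [← this]; ring
    rw [Finset.sum_congr rfl hsplit, Finset.sum_add_distrib, hA, hB, hC]
    ring
  have hder : ∀ t : ℝ, HasDerivAt (fun t => ((m : ℝ) + 1) * phiF f (m + 1) t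
      - t * ∑ p ∈ antidiagonal m, gcoefF f p.1 * phiF f p.2 t) 0 t := by
    intro t
    have h1 : HasDerivAt (fun t => ((m : ℝ) + 1) * phiF f (m + 1) t)
        (((m : ℝ) + 1) * dphiF f (m + 1) t) t :=
      (phiF_hasDeriv f (m + 1) t).const_mul _
    have h2 : HasDerivAt (fun t => t * ∑ p ∈ antidiagonal m, gcoefF f p.1 * phiF f p.2 t)
        (1 * (∑ p ∈ antidiagonal m, gcoefF f p.1 * phiF f p.2 t)
          + t * ∑ p ∈ antidiagonal m, gcoefF f p.1 * dphiF f p.2 t) t :=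
      (hasDerivAt_id t).mul (HasDerivAt.fun_sum fun p _ => (phiF_hasDeriv f p.2 t).const_mul _)
    have h3 := h1.sub h2
    refine h3.congr_deriv ?_
    rw [hkey t]; ring
  have hconst := is_const_of_deriv_eq_zero (fun t => (hder t).differentiableAt)
      (fun t => (hder t).deriv) u 0
  have h0 : phiF f (m + 1) 0 = 0 := phiF_at_zero hf0 hbin (m + 1) (by omega)
  simp only [h0, mul_zero, zero_mul, sub_zero] at hconst
  linarith [hconst]

end Main2
/-- `C_M(β) = ∑_{i+l=M} φ_i(ai+β) φ_l(-ai-β)`. -/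
noncomputable def CcF (f : ℕ → Polynomial ℝ) (a : ℝ) (M : ℕ) (β : ℝ) : ℝ :=
  ∑ p ∈ antidiagonal M, phiF f p.1 (a * p.1 + β) * phiF f p.2 (-(a * p.1) - β)

section Main3

variable {f : ℕ → Polynomial ℝ}

lemma CcF_const (hf0 : f 0 = 1)
    (hbin : ∀ n : ℕ, ∀ x y : ℝ, (f n).eval (x + y) =
      ∑ j ∈ Finset.range (n + 1), (n.choose j : ℝ) * (f j).eval x * (f (n - j)).eval y)
    (a : ℝ) (M : ℕ) (β : ℝ) : CcF f a M β = CcF f a M 0 := by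
  induction M using Nat.strong_induction_on generalizing β with
  | _ M IH =>
  have hD : ∀ β : ℝ, HasDerivAt (CcF f a M)
      (∑ p ∈ antidiagonal M,
        (dphiF f p.1 (a * p.1 + β) * phiF f p.2 (-(a * p.1) - β)
          + phiF f p.1 (a * p.1 + β) * -dphiF f p.2 (-(a * p.1) - β))) β := by
    intro β
    refine HasDerivAt.fun_sum fun p _ => ?_
    exact (phiF_shift_hasDeriv f p.1 (a * p.1) β).mul
      (phiF_negshift_hasDeriv f p.2 (-(a * p.1)) β)
  have hDz : ∀ β : ℝ, (∑ p ∈ antidiagonal M,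
      (dphiF f p.1 (a * p.1 + β) * phiF f p.2 (-(a * p.1) - β)
        + phiF f p.1 (a * p.1 + β) * -dphiF f p.2 (-(a * p.1) - β))) = 0 := by
    intro β
    rw [Finset.sum_add_distrib]
    have hP1 : ∑ p ∈ antidiagonal M,
        dphiF f p.1 (a * p.1 + β) * phiF f p.2 (-(a * p.1) - β)
        = ∑ p ∈ antidiagonal M, dcoefF f p.1 * CcF f a p.2 (a * p.1 + β) := by
      have e1 : ∀ p ∈ antidiagonal M,
          dphiF f p.1 (a * p.1 + β) * phiF f p.2 (-(a * p.1) - β)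
          = ∑ q ∈ antidiagonal p.1,
              phiF f q.1 (a * q.1 + (a * q.2 + β)) * dcoefF f q.2
                * phiF f p.2 (-(a * q.1) - (a * q.2 + β)) := by
        intro p hp
        rw [dphiF_eq hf0 hbin, Finset.sum_mul]
        refine Finset.sum_congr rfl fun q hq => ?_
        have hq' : q.1 + q.2 = p.1 := Finset.HasAntidiagonal.mem_antidiagonal.mp hq
        have hc : (p.1 : ℝ) = (q.1 : ℝ) + (q.2 : ℝ) := by exact_mod_cast hq'.symm
        rw [hc]; ring_nf
      rw [Finset.sum_congr rfl e1]
      rw [AD3b M (fun q r l => phiF f q (a * q + (a * r + β)) * dcoefF f r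
            * phiF f l (-(a * q) - (a * r + β)))]
      refine Finset.sum_congr rfl fun p _ => ?_
      unfold CcF
      rw [Finset.mul_sum]
      exact Finset.sum_congr rfl fun q _ => by ring
    have hP2 : ∑ p ∈ antidiagonal M,
        phiF f p.1 (a * p.1 + β) * -dphiF f p.2 (-(a * p.1) - β)
        = -∑ p ∈ antidiagonal M, dcoefF f p.1 * CcF f a p.2 β := by
      have e1 : ∀ p ∈ antidiagonal M,
          phiF f p.1 (a * p.1 + β) * -dphiF f p.2 (-(a * p.1) - β)
          = -∑ q ∈ antidiagonal p.2,
              phiF f p.1 (a * p.1 + β) * (phiF f q.1 (-(a * p.1) - β) * dcoefF f q.2) := by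
        intro p _
        rw [dphiF_eq hf0 hbin, mul_neg, Finset.mul_sum]
      calc ∑ p ∈ antidiagonal M,
            phiF f p.1 (a * p.1 + β) * -dphiF f p.2 (-(a * p.1) - β)
          = ∑ p ∈ antidiagonal M, -∑ q ∈ antidiagonal p.2,
              phiF f p.1 (a * p.1 + β) * (phiF f q.1 (-(a * p.1) - β) * dcoefF f q.2) :=
            Finset.sum_congr rfl e1
        _ = -∑ p ∈ antidiagonal M, ∑ q ∈ antidiagonal p.2,
              phiF f p.1 (a * p.1 + β) * (phiF f q.1 (-(a * p.1) - β) * dcoefF f q.2) :=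
            Finset.sum_neg_distrib _
        _ = -∑ p ∈ antidiagonal M, dcoefF f p.1 * CcF f a p.2 β := by
            congr 1
            rw [← AD3a M (fun i q r => phiF f i (a * i + β)
              * (phiF f q (-(a * i) - β) * dcoefF f r))]
            rw [ADswap M (fun r w => dcoefF f r * CcF f a w β)]
            refine Finset.sum_congr rfl fun p _ => ?_
            unfold CcF
            rw [Finset.mul_sum]
            exact Finset.sum_congr rfl fun q _ => by ring
    rw [hP1, hP2]
    rw [add_neg_eq_zero]
    refine Finset.sum_congr rfl fun p hp => ?_
    rcases Nat.eq_zero_or_pos p.1 with h1 | h1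
    · simp [h1, dcoefF_zero hf0]
    · have hw : p.2 < M := by
        have := Finset.HasAntidiagonal.mem_antidiagonal.mp hp; omega
      rw [IH p.2 hw (a * p.1 + β), IH p.2 hw β]
  have hder : ∀ t : ℝ, HasDerivAt (CcF f a M) 0 t := fun t => hDz t ▸ hD t
  exact is_const_of_deriv_eq_zero (fun t => (hder t).differentiableAt)
    (fun t => (hder t).deriv) β 0

end Main3
/-- `S_N(β) = ∑_{s+l=N} φ_s(x+as+β) φ_l(-as-β)`. -/
noncomputable def SxF (f : ℕ → Polynomial ℝ) (a x : ℝ) (N : ℕ) (β : ℝ) : ℝ :=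
  ∑ p ∈ antidiagonal N, phiF f p.1 (x + a * p.1 + β) * phiF f p.2 (-(a * p.1) - β)

noncomputable def kapF (f : ℕ → Polynomial ℝ) (a : ℝ) (M : ℕ) : ℝ := CcF f a M 0

section Main4

variable {f : ℕ → Polynomial ℝ}
variable (hf0 : f 0 = 1)
variable (hbin : ∀ n : ℕ, ∀ x y : ℝ, (f n).eval (x + y) =
      ∑ j ∈ Finset.range (n + 1), (n.choose j : ℝ) * (f j).eval x * (f (n - j)).eval y)

include hf0 hbin

lemma SxF_eq (a x : ℝ) (N : ℕ) (β : ℝ) :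
    SxF f a x N β = ∑ p ∈ antidiagonal N, phiF f p.1 x * kapF f a p.2 := by
  unfold SxF
  have e1 : ∀ p ∈ antidiagonal N,
      phiF f p.1 (x + a * p.1 + β) * phiF f p.2 (-(a * p.1) - β)
      = ∑ q ∈ antidiagonal p.1, phiF f q.1 x
          * (phiF f q.2 (a * q.2 + (a * q.1 + β)) * phiF f p.2 (-(a * q.2) - (a * q.1 + β))) := by
    intro p hp
    rw [add_assoc, phiF_add hbin, Finset.sum_mul]
    refine Finset.sum_congr rfl fun q hq => ?_
    have hq' : q.1 + q.2 = p.1 := Finset.HasAntidiagonal.mem_antidiagonal.mp hq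
    have hc : (p.1 : ℝ) = (q.1 : ℝ) + (q.2 : ℝ) := by exact_mod_cast hq'.symm
    rw [hc]; ring_nf
  rw [Finset.sum_congr rfl e1]
  rw [AD3a N (fun q1 q2 l => phiF f q1 x
    * (phiF f q2 (a * q2 + (a * q1 + β)) * phiF f l (-(a * q2) - (a * q1 + β))))]
  refine Finset.sum_congr rfl fun p _ => ?_
  unfold kapF
  rw [← CcF_const hf0 hbin a p.2 (a * p.1 + β)]
  unfold CcF
  rw [Finset.mul_sum]

lemma SxF_const (a x : ℝ) (N : ℕ) (β : ℝ) : SxF f a x N β = SxF f a x N 0 :=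
  (SxF_eq hf0 hbin a x N β).trans (SxF_eq hf0 hbin a x N 0).symm

/-- The sub-lemma: `a ∑_{j+i=v} g_j φ_i(u) = φ_{v+1}(u)` when `u = a(v+1)`. -/
lemma SLkey (a : ℝ) (v : ℕ) :
    a * ∑ p ∈ antidiagonal v, gcoefF f p.1 * phiF f p.2 (a * ((v : ℝ) + 1))
      = phiF f (v + 1) (a * ((v : ℝ) + 1)) := by
  have h := L2phi hf0 hbin v (a * ((v : ℝ) + 1))
  have hne : ((v : ℝ) + 1) ≠ 0 := by positivity
  apply mul_left_cancel₀ hne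
  rw [h]; ring

lemma kapF_rec (a : ℝ) (M : ℕ) :
    kapF f a (M + 1) = a * ∑ p ∈ antidiagonal M, gcoefF f p.1 * kapF f a p.2 := by
  have hR : a * ∑ p ∈ antidiagonal M, gcoefF f p.1 * kapF f a p.2
      = ∑ p ∈ antidiagonal M,
          phiF f (p.1 + 1) (a * ((p.1 : ℝ) + 1)) * phiF f p.2 (-(a * ((p.1 : ℝ) + 1))) := by
    have e1 : ∀ p ∈ antidiagonal M, gcoefF f p.1 * kapF f a p.2
        = ∑ q ∈ antidiagonal p.2, gcoefF f p.1
            * (phiF f q.1 (a * q.1 + a * ((p.1 : ℝ) + 1))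
              * phiF f q.2 (-(a * q.1) - a * ((p.1 : ℝ) + 1))) := by
      intro p _
      rw [kapF, ← CcF_const hf0 hbin a p.2 (a * ((p.1 : ℝ) + 1))]
      unfold CcF
      rw [Finset.mul_sum]
    rw [Finset.sum_congr rfl e1, Finset.mul_sum]
    have e2 : ∀ p ∈ antidiagonal M,
        a * ∑ q ∈ antidiagonal p.2, gcoefF f p.1
            * (phiF f q.1 (a * q.1 + a * ((p.1 : ℝ) + 1))
              * phiF f q.2 (-(a * q.1) - a * ((p.1 : ℝ) + 1)))
        = ∑ q ∈ antidiagonal p.2, a * (gcoefF f p.1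
            * (phiF f q.1 (a * q.1 + a * ((p.1 : ℝ) + 1))
              * phiF f q.2 (-(a * q.1) - a * ((p.1 : ℝ) + 1)))) := by
      intro p _; rw [Finset.mul_sum]
    rw [Finset.sum_congr rfl e2]
    rw [← AD3a M (fun j i w => a * (gcoefF f j
      * (phiF f i (a * i + a * ((j : ℝ) + 1)) * phiF f w (-(a * i) - a * ((j : ℝ) + 1)))))]
    refine Finset.sum_congr rfl fun p hp => ?_
    have e3 : ∀ q ∈ antidiagonal p.1,
        a * (gcoefF f q.1
          * (phiF f q.2 (a * q.2 + a * ((q.1 : ℝ) + 1)) * phiF f p.2 (-(a * q.2) - a * ((q.1 : ℝ) + 1))))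
        = (gcoefF f q.1 * phiF f q.2 (a * ((p.1 : ℝ) + 1))) * (a * phiF f p.2 (-(a * ((p.1 : ℝ) + 1)))) := by
      intro q hq
      have hq' : q.1 + q.2 = p.1 := Finset.HasAntidiagonal.mem_antidiagonal.mp hq
      have hc : (p.1 : ℝ) = (q.1 : ℝ) + (q.2 : ℝ) := by exact_mod_cast hq'.symm
      rw [hc]; ring_nf
    rw [Finset.sum_congr rfl e3, ← Finset.sum_mul]
    calc (∑ q ∈ antidiagonal p.1, gcoefF f q.1 * phiF f q.2 (a * ((p.1 : ℝ) + 1)))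
          * (a * phiF f p.2 (-(a * ((p.1 : ℝ) + 1))))
        = (a * ∑ q ∈ antidiagonal p.1, gcoefF f q.1 * phiF f q.2 (a * ((p.1 : ℝ) + 1)))
          * phiF f p.2 (-(a * ((p.1 : ℝ) + 1))) := by ring
      _ = phiF f (p.1 + 1) (a * ((p.1 : ℝ) + 1)) * phiF f p.2 (-(a * ((p.1 : ℝ) + 1))) := by
          rw [SLkey hf0 hbin]
  have hL : kapF f a (M + 1)
      = ∑ p ∈ antidiagonal M,
          phiF f (p.1 + 1) (a * ((p.1 : ℝ) + 1)) * phiF f p.2 (-(a * ((p.1 : ℝ) + 1))) := by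
    unfold kapF CcF
    rw [Finset.Nat.sum_antidiagonal_succ
      (f := fun p => phiF f p.1 (a * p.1 + 0) * phiF f p.2 (-(a * p.1) - 0))]
    have hz : phiF f (M + 1) (-(a * ((0 : ℕ) : ℝ)) - 0) = 0 := by
      have h0 : (-(a * ((0 : ℕ) : ℝ)) - 0) = 0 := by push_cast; ring
      rw [h0]; exact phiF_at_zero hf0 hbin (M + 1) (by omega)
    rw [hz, mul_zero, zero_add]
    refine Finset.sum_congr rfl fun p _ => ?_
    have h1 : a * ((p.1 + 1 : ℕ) : ℝ) + 0 = a * ((p.1 : ℝ) + 1) := by push_cast; ring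
    have h2 : -(a * ((p.1 + 1 : ℕ) : ℝ)) - 0 = -(a * ((p.1 : ℝ) + 1)) := by push_cast; ring
    rw [h1, h2]
  rw [hL, hR]

lemma Tprime (a : ℝ) (n : ℕ) (x : ℝ) :
    SxF f a x (n + 1) 0 = phiF f (n + 1) x
      + a * ∑ p ∈ antidiagonal n, gcoefF f p.1 * SxF f a x p.2 0 := by
  have e1 : ∀ p ∈ antidiagonal n, gcoefF f p.1 * SxF f a x p.2 0
      = ∑ q ∈ antidiagonal p.2, gcoefF f p.1 * (phiF f q.1 x * kapF f a q.2) := by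
    intro p _
    rw [SxF_eq hf0 hbin, Finset.mul_sum]
  rw [Finset.sum_congr rfl e1, Finset.mul_sum]
  have e2 : ∀ p ∈ antidiagonal n,
      a * ∑ q ∈ antidiagonal p.2, gcoefF f p.1 * (phiF f q.1 x * kapF f a q.2)
      = ∑ q ∈ antidiagonal p.2, phiF f q.1 x * (a * (gcoefF f p.1 * kapF f a q.2)) := by
    intro p _
    rw [Finset.mul_sum]
    exact Finset.sum_congr rfl fun q _ => by ring
  rw [Finset.sum_congr rfl e2]
  rw [← AD3a n (fun j q w => phiF f q x * (a * (gcoefF f j * kapF f a w)))]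
  rw [AD3b n (fun j q w => phiF f q x * (a * (gcoefF f j * kapF f a w)))]
  have e4 : ∀ p ∈ antidiagonal n,
      ∑ q ∈ antidiagonal p.2, phiF f p.1 x * (a * (gcoefF f q.1 * kapF f a q.2))
      = phiF f p.1 x * kapF f a (p.2 + 1) := by
    intro p _
    rw [kapF_rec hf0 hbin, Finset.mul_sum, Finset.mul_sum]
  rw [Finset.sum_congr rfl e4]
  rw [SxF_eq hf0 hbin]
  rw [Finset.Nat.sum_antidiagonal_succ' (f := fun p => phiF f p.1 x * kapF f a p.2)]
  have hk0 : kapF f a 0 = 1 := by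
    simp [kapF, CcF, phiF_zero hf0]
  rw [hk0, mul_one]

end Main4
section Main5

variable {f F : ℕ → Polynomial ℝ}
variable (hf0 : f 0 = 1)
variable (hbin : ∀ n : ℕ, ∀ x y : ℝ, (f n).eval (x + y) =
      ∑ j ∈ Finset.range (n + 1), (n.choose j : ℝ) * (f j).eval x * (f (n - j)).eval y)
variable (hF0 : F 0 = 1)
variable {a : ℝ}
variable (hF : ∀ n : ℕ, 1 ≤ n → ∀ x : ℝ, (a * n + x) * (F n).eval x = x * (f n).eval (a * n + x))

include hf0 hbin hF0 hF

/-- The key identity `(An')` for generic `x`. -/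
lemma Tgen (n : ℕ) (x : ℝ) (hx : ∀ m : ℕ, 1 ≤ m → m ≤ n → x + a * m ≠ 0) :
    ∑ p ∈ antidiagonal n, ((F p.1).eval x / (Nat.factorial p.1 : ℝ)) * phiF f p.2 (-(a * p.1))
      = phiF f n x := by
  cases n with
  | zero =>
    simp [Finset.Nat.antidiagonal_zero, hF0, phiF_zero hf0]
  | succ N =>
    rw [Finset.Nat.sum_antidiagonal_succ
      (f := fun p => ((F p.1).eval x / (Nat.factorial p.1 : ℝ)) * phiF f p.2 (-(a * p.1)))]
    have hz : phiF f (N + 1) (-(a * ((0 : ℕ) : ℝ))) = 0 := by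
      have h0 : (-(a * ((0 : ℕ) : ℝ))) = 0 := by push_cast; ring
      rw [h0]; exact phiF_at_zero hf0 hbin (N + 1) (by omega)
    rw [hz, mul_zero, zero_add]
    have key : ∀ p ∈ antidiagonal N,
        ((F (p.1 + 1)).eval x / (Nat.factorial (p.1 + 1) : ℝ)) * phiF f p.2 (-(a * ((p.1 + 1 : ℕ) : ℝ)))
        = phiF f (p.1 + 1) (x + a * ((p.1 : ℝ) + 1)) * phiF f p.2 (-(a * ((p.1 : ℝ) + 1)))
          - ∑ q ∈ antidiagonal p.1, a * (gcoefF f q.1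
              * (phiF f q.2 (x + a * q.2 + a * ((q.1 : ℝ) + 1))
                * phiF f p.2 (-(a * q.2) - a * ((q.1 : ℝ) + 1)))) := by
      intro p hp
      have hmem : p.1 + p.2 = N := Finset.HasAntidiagonal.mem_antidiagonal.mp hp
      have hu : x + a * ((p.1 : ℝ) + 1) ≠ 0 := by
        have := hx (p.1 + 1) (by omega) (by omega)
        push_cast at this ⊢
        convert this using 2
      set u : ℝ := x + a * ((p.1 : ℝ) + 1) with hudef
      have hFm' : u * (F (p.1 + 1)).eval x = x * (f (p.1 + 1)).eval u := by
        have h := hF (p.1 + 1) (by omega) x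
        have harg : a * ((p.1 + 1 : ℕ) : ℝ) + x = u := by rw [hudef]; push_cast; ring
        rw [harg] at h
        exact h
      have hL2 := L2phi hf0 hbin p.1 u
      have hC : (F (p.1 + 1)).eval x / (Nat.factorial (p.1 + 1) : ℝ)
          = phiF f (p.1 + 1) u - a * ∑ q ∈ antidiagonal p.1, gcoefF f q.1 * phiF f q.2 u := by
        apply mul_left_cancel₀ hu
        have hA : u * ((F (p.1 + 1)).eval x / (Nat.factorial (p.1 + 1) : ℝ))
            = x * phiF f (p.1 + 1) u := by
          rw [mul_div_assoc', hFm', phiF, mul_div_assoc]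
        rw [hA, mul_sub]
        have hB : u * (a * ∑ q ∈ antidiagonal p.1, gcoefF f q.1 * phiF f q.2 u)
            = a * (((p.1 : ℝ) + 1) * phiF f (p.1 + 1) u) := by
          rw [hL2]; ring
        rw [hB, hudef]; ring
      rw [hC]
      have hsplit : (phiF f (p.1 + 1) u - a * ∑ q ∈ antidiagonal p.1, gcoefF f q.1 * phiF f q.2 u)
            * phiF f p.2 (-(a * ((p.1 + 1 : ℕ) : ℝ)))
          = phiF f (p.1 + 1) u * phiF f p.2 (-(a * ((p.1 : ℝ) + 1)))
            - ∑ q ∈ antidiagonal p.1, a * (gcoefF f q.1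
                * (phiF f q.2 u * phiF f p.2 (-(a * ((p.1 : ℝ) + 1))))) := by
        have hc : (((p.1 + 1 : ℕ) : ℝ)) = (p.1 : ℝ) + 1 := by push_cast; ring
        rw [hc, sub_mul]
        congr 1
        rw [Finset.mul_sum, Finset.sum_mul]
        exact Finset.sum_congr rfl fun q _ => by ring
      rw [hsplit]
      congr 1
      refine Finset.sum_congr rfl fun q hq => ?_
      have hq' : q.1 + q.2 = p.1 := Finset.HasAntidiagonal.mem_antidiagonal.mp hq
      have hc2 : (p.1 : ℝ) = (q.1 : ℝ) + (q.2 : ℝ) := by exact_mod_cast hq'.symm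
      rw [hudef, hc2]; ring_nf
    rw [Finset.sum_congr rfl key, Finset.sum_sub_distrib]
    have hS1 : ∑ p ∈ antidiagonal N,
        phiF f (p.1 + 1) (x + a * ((p.1 : ℝ) + 1)) * phiF f p.2 (-(a * ((p.1 : ℝ) + 1)))
        = SxF f a x (N + 1) 0 := by
      unfold SxF
      rw [Finset.Nat.sum_antidiagonal_succ
        (f := fun p => phiF f p.1 (x + a * p.1 + 0) * phiF f p.2 (-(a * p.1) - 0))]
      have hz2 : phiF f (N + 1) (-(a * ((0 : ℕ) : ℝ)) - 0) = 0 := by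
        have h0 : (-(a * ((0 : ℕ) : ℝ)) - 0) = 0 := by push_cast; ring
        rw [h0]; exact phiF_at_zero hf0 hbin (N + 1) (by omega)
      rw [hz2, mul_zero, zero_add]
      refine Finset.sum_congr rfl fun p _ => ?_
      have h1 : x + a * ((p.1 + 1 : ℕ) : ℝ) + 0 = x + a * ((p.1 : ℝ) + 1) := by push_cast; ring
      have h2 : -(a * ((p.1 + 1 : ℕ) : ℝ)) - 0 = -(a * ((p.1 : ℝ) + 1)) := by push_cast; ring
      rw [h1, h2]
    have hS2 : ∑ p ∈ antidiagonal N, ∑ q ∈ antidiagonal p.1, a * (gcoefF f q.1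
          * (phiF f q.2 (x + a * q.2 + a * ((q.1 : ℝ) + 1))
            * phiF f p.2 (-(a * q.2) - a * ((q.1 : ℝ) + 1))))
        = a * ∑ p ∈ antidiagonal N, gcoefF f p.1 * SxF f a x p.2 0 := by
      rw [AD3a N (fun j i w => a * (gcoefF f j
        * (phiF f i (x + a * i + a * ((j : ℝ) + 1)) * phiF f w (-(a * i) - a * ((j : ℝ) + 1)))))]
      rw [Finset.mul_sum]
      refine Finset.sum_congr rfl fun p _ => ?_
      rw [← SxF_const hf0 hbin a x p.2 (a * ((p.1 : ℝ) + 1))]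
      unfold SxF
      rw [Finset.mul_sum, Finset.mul_sum]
    rw [hS1, hS2, Tprime hf0 hbin a N x]
    ring
end Main5
section Main6

variable {f F : ℕ → Polynomial ℝ}
variable (hf0 : f 0 = 1)
variable (hbin : ∀ n : ℕ, ∀ x y : ℝ, (f n).eval (x + y) =
      ∑ j ∈ Finset.range (n + 1), (n.choose j : ℝ) * (f j).eval x * (f (n - j)).eval y)
variable (hF0 : F 0 = 1)
variable {a : ℝ}
variable (hF : ∀ n : ℕ, 1 ≤ n → ∀ x : ℝ, (a * n + x) * (F n).eval x = x * (f n).eval (a * n + x))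

include hf0 hbin hF0 hF

/-- `(An')` for all real `x`, by polynomial density. -/
lemma Tall (n : ℕ) (x : ℝ) :
    ∑ p ∈ antidiagonal n, ((F p.1).eval x / (Nat.factorial p.1 : ℝ)) * phiF f p.2 (-(a * p.1))
      = phiF f n x := by
  set Q : Polynomial ℝ := (∑ p ∈ antidiagonal n,
      Polynomial.C (phiF f p.2 (-(a * p.1)) / (Nat.factorial p.1 : ℝ)) * F p.1)
      - Polynomial.C ((Nat.factorial n : ℝ))⁻¹ * f n with hQ
  have hev : ∀ y : ℝ, Q.eval y
      = (∑ p ∈ antidiagonal n,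
          ((F p.1).eval y / (Nat.factorial p.1 : ℝ)) * phiF f p.2 (-(a * p.1)))
        - phiF f n y := by
    intro y
    rw [hQ]
    simp only [Polynomial.eval_sub, Polynomial.eval_finset_sum, Polynomial.eval_mul,
      Polynomial.eval_C]
    congr 1
    · exact Finset.sum_congr rfl fun p _ => by ring
    · unfold phiF; ring
  have hQ0 : Q = 0 := by
    apply Polynomial.eq_zero_of_infinite_isRoot
    set bad : Finset ℝ := (Finset.Icc 1 n).image (fun m : ℕ => -(a * m)) with hbad
    have h1 : ((bad : Set ℝ))ᶜ ⊆ {y | Q.IsRoot y} := by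
      intro y hy
      have hx : ∀ m : ℕ, 1 ≤ m → m ≤ n → y + a * m ≠ 0 := by
        intro m h1m h2m hzero
        apply hy
        simp only [hbad, Finset.coe_image, Set.mem_image, Finset.mem_coe, Finset.mem_Icc]
        exact ⟨m, ⟨h1m, h2m⟩, by linarith⟩
      show Q.IsRoot y
      unfold Polynomial.IsRoot
      rw [hev y, Tgen hf0 hbin hF0 hF n y hx, sub_self]
    exact (bad.finite_toSet.infinite_compl).mono h1
  have hx := hev x
  rw [hQ0, Polynomial.eval_zero] at hx
  linarith

/-- `(H)`: `φ_n(x+y) = ∑ (F_m(x)/m!) φ_{n-m}(y - am)`. -/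
lemma L8phi (n : ℕ) (x y : ℝ) :
    phiF f n (x + y) = ∑ p ∈ antidiagonal n,
      ((F p.1).eval x / (Nat.factorial p.1 : ℝ)) * phiF f p.2 (y - a * p.1) := by
  have e1 : ∀ p ∈ antidiagonal n,
      ((F p.1).eval x / (Nat.factorial p.1 : ℝ)) * phiF f p.2 (y - a * p.1)
      = ∑ q ∈ antidiagonal p.2, ((F p.1).eval x / (Nat.factorial p.1 : ℝ))
          * (phiF f q.1 (-(a * p.1)) * phiF f q.2 y) := by
    intro p _
    have harg : y - a * (p.1 : ℝ) = -(a * p.1) + y := by ring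
    rw [harg, phiF_add hbin, Finset.mul_sum]
  rw [Finset.sum_congr rfl e1]
  rw [← AD3a n (fun m i w => ((F m).eval x / (Nat.factorial m : ℝ))
    * (phiF f i (-(a * m)) * phiF f w y))]
  have e2 : ∀ p ∈ antidiagonal n,
      ∑ q ∈ antidiagonal p.1, ((F q.1).eval x / (Nat.factorial q.1 : ℝ))
          * (phiF f q.2 (-(a * q.1)) * phiF f p.2 y)
      = phiF f p.1 x * phiF f p.2 y := by
    intro p _
    calc ∑ q ∈ antidiagonal p.1, ((F q.1).eval x / (Nat.factorial q.1 : ℝ))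
          * (phiF f q.2 (-(a * q.1)) * phiF f p.2 y)
        = (∑ q ∈ antidiagonal p.1, ((F q.1).eval x / (Nat.factorial q.1 : ℝ))
            * phiF f q.2 (-(a * q.1))) * phiF f p.2 y := by
          rw [Finset.sum_mul]
          exact Finset.sum_congr rfl fun q _ => by ring
      _ = phiF f p.1 x * phiF f p.2 y := by rw [Tall hf0 hbin hF0 hF p.1 x]
  rw [Finset.sum_congr rfl e2, ← phiF_add hbin]

/-- `F` is of binomial type (normalized form). -/
lemma L9phi (n : ℕ) (x z : ℝ) :
    (F n).eval (x + z) / (Nat.factorial n : ℝ)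
      = ∑ p ∈ antidiagonal n, ((F p.1).eval x / (Nat.factorial p.1 : ℝ))
          * ((F p.2).eval z / (Nat.factorial p.2 : ℝ)) := by
  induction n using Nat.strong_induction_on with
  | _ n IH =>
  have hstep : ∀ y : ℝ, ∑ p ∈ antidiagonal n,
      (∑ q ∈ antidiagonal p.1, ((F q.1).eval x / (Nat.factorial q.1 : ℝ))
          * ((F q.2).eval z / (Nat.factorial q.2 : ℝ))) * phiF f p.2 (y - a * p.1)
      = phiF f n ((x + z) + y) := by
    intro y
    have e1 : ∀ p ∈ antidiagonal n,
        (∑ q ∈ antidiagonal p.1, ((F q.1).eval x / (Nat.factorial q.1 : ℝ))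
            * ((F q.2).eval z / (Nat.factorial q.2 : ℝ))) * phiF f p.2 (y - a * p.1)
        = ∑ q ∈ antidiagonal p.1, ((F q.1).eval x / (Nat.factorial q.1 : ℝ))
            * (((F q.2).eval z / (Nat.factorial q.2 : ℝ))
              * phiF f p.2 ((y - a * q.1) - a * q.2)) := by
      intro p _
      rw [Finset.sum_mul]
      refine Finset.sum_congr rfl fun q hq => ?_
      have hq' : q.1 + q.2 = p.1 := Finset.HasAntidiagonal.mem_antidiagonal.mp hq
      have hc : (p.1 : ℝ) = (q.1 : ℝ) + (q.2 : ℝ) := by exact_mod_cast hq'.symm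
      rw [hc]; ring_nf
    rw [Finset.sum_congr rfl e1]
    rw [AD3a n (fun j l w => ((F j).eval x / (Nat.factorial j : ℝ))
      * (((F l).eval z / (Nat.factorial l : ℝ)) * phiF f w ((y - a * j) - a * l)))]
    have e2 : ∀ p ∈ antidiagonal n,
        ∑ q ∈ antidiagonal p.2, ((F p.1).eval x / (Nat.factorial p.1 : ℝ))
            * (((F q.1).eval z / (Nat.factorial q.1 : ℝ))
              * phiF f q.2 ((y - a * p.1) - a * q.1))
        = ((F p.1).eval x / (Nat.factorial p.1 : ℝ)) * phiF f p.2 ((z + y) - a * p.1) := by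
      intro p _
      rw [← Finset.mul_sum]
      congr 1
      have harg : (z + y) - a * (p.1 : ℝ) = z + (y - a * p.1) := by ring
      rw [harg, L8phi hf0 hbin hF0 hF p.2 z (y - a * p.1)]
    rw [Finset.sum_congr rfl e2]
    have harg2 : (x + z) + y = x + (z + y) := by ring
    rw [harg2, L8phi hf0 hbin hF0 hF n x (z + y)]
  have h1 := L8phi hf0 hbin hF0 hF n (x + z) 0
  have h2 := hstep 0
  have h3 : ∑ p ∈ antidiagonal n,
      ((∑ q ∈ antidiagonal p.1, ((F q.1).eval x / (Nat.factorial q.1 : ℝ))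
          * ((F q.2).eval z / (Nat.factorial q.2 : ℝ)))
        - (F p.1).eval (x + z) / (Nat.factorial p.1 : ℝ)) * phiF f p.2 (0 - a * p.1) = 0 := by
    have e3 : ∀ p ∈ antidiagonal n,
        ((∑ q ∈ antidiagonal p.1, ((F q.1).eval x / (Nat.factorial q.1 : ℝ))
            * ((F q.2).eval z / (Nat.factorial q.2 : ℝ)))
          - (F p.1).eval (x + z) / (Nat.factorial p.1 : ℝ)) * phiF f p.2 (0 - a * p.1)
        = (∑ q ∈ antidiagonal p.1, ((F q.1).eval x / (Nat.factorial q.1 : ℝ))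
            * ((F q.2).eval z / (Nat.factorial q.2 : ℝ))) * phiF f p.2 (0 - a * p.1)
          - ((F p.1).eval (x + z) / (Nat.factorial p.1 : ℝ)) * phiF f p.2 (0 - a * p.1) := by
      intro p _; ring
    rw [Finset.sum_congr rfl e3, Finset.sum_sub_distrib, h2, ← h1, sub_self]
  rw [Finset.sum_eq_single_of_mem (n, 0) (Finset.HasAntidiagonal.mem_antidiagonal.mpr (by omega)) ?side] at h3
  · have hphi0 : phiF f 0 (0 - a * ((n, 0).1 : ℝ)) = 1 := phiF_zero hf0 _
    simp only [hphi0, mul_one] at h3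
    linarith
  · intro p hp hne
    have hmem : p.1 + p.2 = n := Finset.HasAntidiagonal.mem_antidiagonal.mp hp
    have hlt : p.1 < n := by
      rcases Nat.lt_or_ge p.1 n with h | h
      · exact h
      · exfalso; apply hne
        have : p.1 = n := by omega
        have h2 : p.2 = 0 := by omega
        cases p; simp_all
    rw [IH p.1 hlt, sub_self, zero_mul]

end Main6
lemma eval_shift_hasDeriv' (p : Polynomial ℝ) (z y : ℝ) :
    HasDerivAt (fun t => p.eval (t + z)) (p.derivative.eval (y + z)) y := by
  simpa [Function.comp_def] using (p.hasDerivAt (y + z)).comp y ((hasDerivAt_id y).add_const z)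

/-- Iterated derivative of a polynomial. -/
noncomputable def DkP (F : ℕ → Polynomial ℝ) (n k : ℕ) : Polynomial ℝ :=
  (fun p => Polynomial.derivative p)^[k] (F n)

lemma DkP_zero (F : ℕ → Polynomial ℝ) (n : ℕ) : DkP F n 0 = F n := rfl

lemma DkP_succ (F : ℕ → Polynomial ℝ) (n k : ℕ) :
    DkP F n (k + 1) = Polynomial.derivative (DkP F n k) := by
  unfold DkP
  rw [Function.iterate_succ_apply']

section Main7

variable {f F : ℕ → Polynomial ℝ}
variable (hf0 : f 0 = 1)
variable (hbin : ∀ n : ℕ, ∀ x y : ℝ, (f n).eval (x + y) =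
      ∑ j ∈ Finset.range (n + 1), (n.choose j : ℝ) * (f j).eval x * (f (n - j)).eval y)
variable (hF0 : F 0 = 1)
variable {a : ℝ}
variable (hF : ∀ n : ℕ, 1 ≤ n → ∀ x : ℝ, (a * n + x) * (F n).eval x = x * (f n).eval (a * n + x))

include hf0 hbin hF0 hF

lemma Pk (k : ℕ) : ∀ (n : ℕ) (x z : ℝ),
    (DkP F n k).eval (x + z) / (Nat.factorial n : ℝ)
      = ∑ p ∈ antidiagonal n, ((F p.1).eval x / (Nat.factorial p.1 : ℝ))
          * ((DkP F p.2 k).eval z / (Nat.factorial p.2 : ℝ)) := by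
  induction k with
  | zero =>
    intro n x z
    simpa [DkP_zero] using L9phi hf0 hbin hF0 hF n x z
  | succ k IHk =>
    intro n x z
    have hfun : (fun z => (DkP F n k).eval (x + z) / (Nat.factorial n : ℝ))
        = fun z => ∑ p ∈ antidiagonal n, ((F p.1).eval x / (Nat.factorial p.1 : ℝ))
            * ((DkP F p.2 k).eval z / (Nat.factorial p.2 : ℝ)) :=
      funext fun z => IHk n x z
    have d1 : HasDerivAt (fun z => (DkP F n k).eval (x + z) / (Nat.factorial n : ℝ))
        ((DkP F n (k + 1)).eval (x + z) / (Nat.factorial n : ℝ)) z := by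
      rw [DkP_succ]
      exact (eval_shift_hasDeriv (DkP F n k) x z).div_const _
    have d2 : HasDerivAt (fun z => ∑ p ∈ antidiagonal n,
        ((F p.1).eval x / (Nat.factorial p.1 : ℝ))
          * ((DkP F p.2 k).eval z / (Nat.factorial p.2 : ℝ)))
        (∑ p ∈ antidiagonal n, ((F p.1).eval x / (Nat.factorial p.1 : ℝ))
          * ((DkP F p.2 (k + 1)).eval z / (Nat.factorial p.2 : ℝ))) z := by
      refine HasDerivAt.fun_sum fun p _ => ?_
      rw [DkP_succ]
      exact (((DkP F p.2 k).hasDerivAt z).div_const _).const_mul _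
    rw [hfun] at d1
    exact d1.unique d2

lemma Qk (k : ℕ) (n : ℕ) (x z : ℝ) :
    (DkP F n (k + 1)).eval (x + z) / (Nat.factorial n : ℝ)
      = ∑ p ∈ antidiagonal n, ((Polynomial.derivative (F p.1)).eval x / (Nat.factorial p.1 : ℝ))
          * ((DkP F p.2 k).eval z / (Nat.factorial p.2 : ℝ)) := by
  have hfun : (fun x => (DkP F n k).eval (x + z) / (Nat.factorial n : ℝ))
      = fun x => ∑ p ∈ antidiagonal n, ((F p.1).eval x / (Nat.factorial p.1 : ℝ))
          * ((DkP F p.2 k).eval z / (Nat.factorial p.2 : ℝ)) :=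
    funext fun x => Pk hf0 hbin hF0 hF k n x z
  have d1 : HasDerivAt (fun x => (DkP F n k).eval (x + z) / (Nat.factorial n : ℝ))
      ((DkP F n (k + 1)).eval (x + z) / (Nat.factorial n : ℝ)) x := by
    rw [DkP_succ]
    exact (eval_shift_hasDeriv' (DkP F n k) z x).div_const _
  have d2 : HasDerivAt (fun x => ∑ p ∈ antidiagonal n,
      ((F p.1).eval x / (Nat.factorial p.1 : ℝ))
        * ((DkP F p.2 k).eval z / (Nat.factorial p.2 : ℝ)))
      (∑ p ∈ antidiagonal n, ((Polynomial.derivative (F p.1)).eval x / (Nat.factorial p.1 : ℝ))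
        * ((DkP F p.2 k).eval z / (Nat.factorial p.2 : ℝ))) x := by
    refine HasDerivAt.fun_sum fun p _ => ?_
    exact (((F p.1).hasDerivAt x).div_const _).mul_const _
  rw [hfun] at d1
  exact d1.unique d2

lemma GOALp (x : ℝ) (k : ℕ) (hk : 1 ≤ k) : ∀ n : ℕ,
    PowerSeries.coeff n
        ((PowerSeries.mk fun m => if m = 0 then (0 : ℝ)
          else (Polynomial.derivative (F m)).eval x / (Nat.factorial m : ℝ)) ^ k)
      = (DkP F n k).eval ((k : ℝ) * x) / (Nat.factorial n : ℝ) := by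
  induction k, hk using Nat.le_induction with
  | base =>
    intro n
    rw [pow_one, PowerSeries.coeff_mk]
    rcases Nat.eq_zero_or_pos n with hn | hn
    · subst hn
      simp [DkP, hF0]
    · have hne : n ≠ 0 := by omega
      simp only [hne, if_false]
      have h1 : DkP F n 1 = Polynomial.derivative (F n) := by
        rw [show (1 : ℕ) = 0 + 1 from rfl, DkP_succ, DkP_zero]
      rw [h1, Nat.cast_one, one_mul]
  | succ k hk IHk =>
    intro n
    rw [pow_succ, PowerSeries.coeff_mul]
    have hterm : ∀ p ∈ antidiagonal n,
        PowerSeries.coeff p.1 ((PowerSeries.mk fun m => if m = 0 then (0 : ℝ)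
            else (Polynomial.derivative (F m)).eval x / (Nat.factorial m : ℝ)) ^ k)
          * PowerSeries.coeff p.2 (PowerSeries.mk fun m => if m = 0 then (0 : ℝ)
            else (Polynomial.derivative (F m)).eval x / (Nat.factorial m : ℝ))
        = ((Polynomial.derivative (F p.2)).eval x / (Nat.factorial p.2 : ℝ))
          * ((DkP F p.1 k).eval ((k : ℝ) * x) / (Nat.factorial p.1 : ℝ)) := by
      intro p _
      rw [IHk p.1, PowerSeries.coeff_mk]
      rcases Nat.eq_zero_or_pos p.2 with h2 | h2
      · rw [h2]
        have hd : Polynomial.derivative (F 0) = 0 := by rw [hF0]; simp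
        simp [hd]
      · have hne : p.2 ≠ 0 := by omega
        simp only [hne, if_false]
        ring
    rw [Finset.sum_congr rfl hterm]
    rw [ADswap n (fun i j => ((Polynomial.derivative (F j)).eval x / (Nat.factorial j : ℝ))
      * ((DkP F i k).eval ((k : ℝ) * x) / (Nat.factorial i : ℝ)))]
    have harg : ((k : ℝ) + 1) * x = x + (k : ℝ) * x := by ring
    rw [Nat.cast_add, Nat.cast_one, harg]
    exact (Qk hf0 hbin hF0 hF k n x ((k : ℝ) * x)).symm

end Main7

/-- `F n` plays the role of the binomial-type sequence `f_n(x;a) = (x/(an+x)) f_n(an+x)`,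
characterized (as a polynomial) by the cleared-denominator identity `hF`. -/
theorem stmt_5 (f : ℕ → Polynomial ℝ) (hf0 : f 0 = 1) (hdeg : ∀ n, (f n).natDegree = n)
    (hbin : ∀ n : ℕ, ∀ x y : ℝ, (f n).eval (x + y) =
      ∑ j ∈ Finset.range (n + 1), (n.choose j : ℝ) * (f j).eval x * (f (n - j)).eval y)
    (a : ℝ) (F : ℕ → Polynomial ℝ) (hF0 : F 0 = 1)
    (hF : ∀ n : ℕ, 1 ≤ n → ∀ x : ℝ, (a * n + x) * (F n).eval x = x * (f n).eval (a * n + x))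
    (n k : ℕ) (hk : 1 ≤ k) (hkn : k ≤ n) (x : ℝ) :
    bellB n k (fun m => (Polynomial.derivative (F m)).eval x) =
      (1 / (Nat.factorial k : ℝ)) *
        iteratedDeriv k (fun z => (F n).eval ((k : ℝ) * x + z)) 0 := by
  have hgen : ∀ (j : ℕ) (p : Polynomial ℝ) (c : ℝ),
      iteratedDeriv j (fun z => p.eval (c + z))
        = fun z => ((fun q => Polynomial.derivative q)^[j] p).eval (c + z) := by
    intro j
    induction j with
    | zero => intro p c; simp [iteratedDeriv_zero]
    | succ j IHj =>
      intro p c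
      rw [iteratedDeriv_succ']
      have hd : deriv (fun z => p.eval (c + z)) = fun z => (Polynomial.derivative p).eval (c + z) :=
        funext fun z => (eval_shift_hasDeriv p c z).deriv
      rw [hd, IHj (Polynomial.derivative p) c]
      funext z
      rw [← Function.iterate_succ_apply]
  have hiter : iteratedDeriv k (fun z => (F n).eval ((k : ℝ) * x + z)) 0
      = (DkP F n k).eval ((k : ℝ) * x) := by
    calc iteratedDeriv k (fun z => (F n).eval ((k : ℝ) * x + z)) 0
        = ((fun q => Polynomial.derivative q)^[k] (F n)).eval ((k : ℝ) * x + 0) :=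
          congrFun (hgen k (F n) ((k : ℝ) * x)) 0
      _ = (DkP F n k).eval ((k : ℝ) * x) := by rw [add_zero]; rfl
  unfold bellB
  rw [GOALp hf0 hbin hF0 hF x k hk n, hiter]
  have hfac : (Nat.factorial n : ℝ) ≠ 0 := Nat.cast_ne_zero.2 (Nat.factorial_ne_zero n)
  field_simp
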